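/- Let (γ_b)_{b≥1} be a nonincreasing sequence of reals in (0,1]. Then for all integers 1 ≤ d ≤ c: ∑_{b=1}^{d} γ_b · ∏_{p=b+1}^{c} (1 − γ_p) ≤ (1 − γ_c)^{c−d} / γ_c. Moreover, if γ_c = c^{−v} with v ∈ (0,1) and ν ∈ (v, 1), then for all c large enough that d_c := c − ⌊c^ν⌋ ≥ 1, one has ∑_{b=1}^{d_c} γ_b · ∏_{p=b+1}^{c} (1 − γ_p) ≤ e · c^v · exp(−c^{ν−v}), and in particular this sum tends to 0 as c → ∞ faster than any power of c. -/

import Mathlib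

/-- Weight of old iterates under exponentially-forgetting averaging: for a nonincreasing
sequence of step sizes `γ_b ∈ (0,1]`, `∑_{b=1}^d γ_b ∏_{p=b+1}^c (1 − γ_p) ≤ (1−γ_c)^{c−d}/γ_c`;
moreover for `γ_c = c^{−v}` with `0 < v < ν < 1` and `d_c = c − ⌊c^ν⌋ ≥ 1`, this sum is at most
`e·c^v·exp(−c^{ν−v})`, hence tends to `0` faster than any power of `c`. -/
theorem old_iterates_weight_bound
    (γ : ℕ → ℝ)
    (hγpos : ∀ b, 1 ≤ b → 0 < γ b) (hγle : ∀ b, 1 ≤ b → γ b ≤ 1)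
    (hmono : ∀ b b', 1 ≤ b → b ≤ b' → γ b' ≤ γ b) :
    (∀ d c : ℕ, 1 ≤ d → d ≤ c →
      ∑ b ∈ Finset.Icc 1 d, γ b * ∏ q ∈ Finset.Icc (b + 1) c, (1 - γ q) ≤
        (1 - γ c) ^ (c - d) / γ c) ∧
    (∀ v ν : ℝ, 0 < v → v < 1 → v < ν → ν < 1 →
      (∀ c : ℕ, 1 ≤ c → γ c = (c : ℝ) ^ (-v)) →
      (∀ c : ℕ, 1 ≤ c - ⌊(c : ℝ) ^ ν⌋₊ →
        ∑ b ∈ Finset.Icc 1 (c - ⌊(c : ℝ) ^ ν⌋₊),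
            γ b * ∏ q ∈ Finset.Icc (b + 1) c, (1 - γ q) ≤
          Real.exp 1 * (c : ℝ) ^ v * Real.exp (-(c : ℝ) ^ (ν - v))) ∧
      ∀ m : ℕ,
        Filter.Tendsto
          (fun c : ℕ => (c : ℝ) ^ m *
            ∑ b ∈ Finset.Icc 1 (c - ⌊(c : ℝ) ^ ν⌋₊),
              γ b * ∏ q ∈ Finset.Icc (b + 1) c, (1 - γ q))
          Filter.atTop (nhds 0)) := by
  -- telescoping bound : the "full" sum up to `d` is at most 1
  have htel : ∀ d : ℕ,
      ∑ b ∈ Finset.Icc 1 d, γ b * ∏ q ∈ Finset.Ioc b d, (1 - γ q) ≤ 1 := by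
    intro d
    induction d with
    | zero => simp
    | succ d ih =>
      have hnm : d + 1 ∉ Finset.Icc 1 d := by simp
      rw [show Finset.Icc 1 (d + 1) = insert (d + 1) (Finset.Icc 1 d) by
        ext x; simp [Finset.mem_Icc]; omega, Finset.sum_insert hnm]
      have h1 : ∀ b ∈ Finset.Icc 1 d,
          γ b * ∏ q ∈ Finset.Ioc b (d + 1), (1 - γ q) =
          (1 - γ (d + 1)) * (γ b * ∏ q ∈ Finset.Ioc b d, (1 - γ q)) := by
        intro b hb
        simp only [Finset.mem_Icc] at hb
        rw [show Finset.Ioc b (d + 1) = insert (d + 1) (Finset.Ioc b d) by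
            ext x; simp [Finset.mem_Ioc]; omega,
          Finset.prod_insert (by simp)]
        ring
      rw [Finset.sum_congr rfl h1, ← Finset.mul_sum]
      have hγd1 : 0 ≤ 1 - γ (d + 1) := by
        have := hγle (d + 1) (by omega); linarith
      have hprod : ∏ q ∈ Finset.Ioc (d + 1) (d + 1), (1 - γ q) = 1 := by simp
      rw [hprod, mul_one]
      nlinarith [mul_le_mul_of_nonneg_left ih hγd1]
  have key : ∀ d c : ℕ, 1 ≤ d → d ≤ c →
      ∑ b ∈ Finset.Icc 1 d, γ b * ∏ q ∈ Finset.Icc (b + 1) c, (1 - γ q) ≤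
        (1 - γ c) ^ (c - d) / γ c := by
    intro d c hd hdc
    have hc1 : 1 ≤ c := hd.trans hdc
    have hγc := hγpos c hc1
    have hγcle := hγle c hc1
    have h1c : 0 ≤ 1 - γ c := by linarith
    -- pointwise bound on each term
    have hpt : ∀ b ∈ Finset.Icc 1 d,
        γ b * ∏ q ∈ Finset.Icc (b + 1) c, (1 - γ q) ≤
        (1 - γ c) ^ (c - d) * (γ b * ∏ q ∈ Finset.Ioc b d, (1 - γ q)) := by
      intro b hb
      simp only [Finset.mem_Icc] at hb
      rw [Finset.Icc_add_one_left_eq_Ioc, ← Finset.prod_Ioc_consecutive _ hb.2 hdc]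
      have htail : ∏ q ∈ Finset.Ioc d c, (1 - γ q) ≤ (1 - γ c) ^ (c - d) := by
        have := Finset.prod_le_prod (s := Finset.Ioc d c)
          (f := fun q => 1 - γ q) (g := fun _ => 1 - γ c)
          (fun q hq => by
            simp only [Finset.mem_Ioc] at hq
            have := hγle q (by omega); linarith)
          (fun q hq => by
            simp only [Finset.mem_Ioc] at hq
            have := hmono q c (by omega) hq.2
            linarith)
        simpa [Finset.prod_const, Nat.card_Ioc] using this
      have hγb : 0 ≤ γ b := (hγpos b hb.1).le
      have hprodnn : 0 ≤ ∏ q ∈ Finset.Ioc b d, (1 - γ q) := by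
        apply Finset.prod_nonneg
        intro q hq
        simp only [Finset.mem_Ioc] at hq
        have := hγle q (by omega); linarith
      calc γ b * ((∏ q ∈ Finset.Ioc b d, (1 - γ q)) * ∏ q ∈ Finset.Ioc d c, (1 - γ q))
          ≤ γ b * ((∏ q ∈ Finset.Ioc b d, (1 - γ q)) * (1 - γ c) ^ (c - d)) := by
            apply mul_le_mul_of_nonneg_left _ hγb
            exact mul_le_mul_of_nonneg_left htail hprodnn
        _ = (1 - γ c) ^ (c - d) * (γ b * ∏ q ∈ Finset.Ioc b d, (1 - γ q)) := by ring
    calc ∑ b ∈ Finset.Icc 1 d, γ b * ∏ q ∈ Finset.Icc (b + 1) c, (1 - γ q)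
        ≤ ∑ b ∈ Finset.Icc 1 d,
            (1 - γ c) ^ (c - d) * (γ b * ∏ q ∈ Finset.Ioc b d, (1 - γ q)) :=
          Finset.sum_le_sum hpt
      _ = (1 - γ c) ^ (c - d) *
            ∑ b ∈ Finset.Icc 1 d, γ b * ∏ q ∈ Finset.Ioc b d, (1 - γ q) := by
          rw [Finset.mul_sum]
      _ ≤ (1 - γ c) ^ (c - d) * 1 := by
          exact mul_le_mul_of_nonneg_left (htel d) (pow_nonneg h1c _)
      _ ≤ (1 - γ c) ^ (c - d) / γ c := by
          rw [mul_one, le_div_iff₀ hγc]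
          nlinarith [pow_nonneg h1c (c - d)]
  refine ⟨key, ?_⟩
  intro v ν hv hv1 hvν hν1 hγ
  -- sum is nonnegative
  have hSnn : ∀ c d : ℕ,
      0 ≤ ∑ b ∈ Finset.Icc 1 d, γ b * ∏ q ∈ Finset.Icc (b + 1) c, (1 - γ q) := by
    intro c d
    apply Finset.sum_nonneg
    intro b hb
    simp only [Finset.mem_Icc] at hb
    apply mul_nonneg (hγpos b hb.1).le
    apply Finset.prod_nonneg
    intro q hq
    simp only [Finset.mem_Icc] at hq
    have := hγle q (by omega); linarith
  have main : ∀ c : ℕ, 1 ≤ c - ⌊(c : ℝ) ^ ν⌋₊ →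
      ∑ b ∈ Finset.Icc 1 (c - ⌊(c : ℝ) ^ ν⌋₊),
          γ b * ∏ q ∈ Finset.Icc (b + 1) c, (1 - γ q) ≤
        Real.exp 1 * (c : ℝ) ^ v * Real.exp (-(c : ℝ) ^ (ν - v)) := by
    intro c hd
    set f := ⌊(c : ℝ) ^ ν⌋₊ with hf
    have hdc : c - f ≤ c := Nat.sub_le _ _
    have hc1 : 1 ≤ c := le_trans hd hdc
    have hfc : f < c := by omega
    have hsub : c - (c - f) = f := Nat.sub_sub_self hfc.le
    have hb1 := key (c - f) c hd hdc
    rw [hsub] at hb1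
    have hcR : (1 : ℝ) ≤ (c : ℝ) := by exact_mod_cast hc1
    have hcR0 : (0 : ℝ) < (c : ℝ) := by linarith
    have hγceq : γ c = (c : ℝ) ^ (-v) := hγ c hc1
    have hγcpos : (0 : ℝ) < (c : ℝ) ^ (-v) := Real.rpow_pos_of_pos hcR0 _
    have hγcle1 : (c : ℝ) ^ (-v) ≤ 1 :=
      Real.rpow_le_one_of_one_le_of_nonpos hcR (by linarith)
    -- (1 - γ c)^f ≤ exp (- f * γ c)
    have h1 : (1 - γ c) ^ f ≤ Real.exp (-(f : ℝ) * γ c) := by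
      have hx : 1 - γ c ≤ Real.exp (-γ c) := by
        have := Real.add_one_le_exp (-γ c); linarith
      have h0 : 0 ≤ 1 - γ c := by rw [hγceq]; linarith
      calc (1 - γ c) ^ f ≤ (Real.exp (-γ c)) ^ f := pow_le_pow_left₀ h0 hx f
        _ = Real.exp (-(f : ℝ) * γ c) := by
            rw [← Real.exp_nat_mul]; ring_nf
    -- f * γ c ≥ c^(ν-v) - 1
    have hflb : (c : ℝ) ^ ν - 1 ≤ (f : ℝ) := by
      have := Nat.lt_floor_add_one ((c : ℝ) ^ ν); linarith
    have h2 : (c : ℝ) ^ (ν - v) - 1 ≤ (f : ℝ) * γ c := by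
      rw [hγceq]
      have hexp : (c : ℝ) ^ ν * (c : ℝ) ^ (-v) = (c : ℝ) ^ (ν - v) := by
        rw [← Real.rpow_add hcR0]; ring_nf
      nlinarith [mul_le_mul_of_nonneg_right hflb hγcpos.le]
    have h3 : Real.exp (-(f : ℝ) * γ c) ≤ Real.exp (1 - (c : ℝ) ^ (ν - v)) := by
      apply Real.exp_le_exp.2; linarith
    have hdiv : (1 - γ c) ^ f / γ c = (1 - γ c) ^ f * (c : ℝ) ^ v := by
      rw [hγceq, Real.rpow_neg hcR0.le, div_eq_mul_inv, inv_inv]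
    calc ∑ b ∈ Finset.Icc 1 (c - f), γ b * ∏ q ∈ Finset.Icc (b + 1) c, (1 - γ q)
        ≤ (1 - γ c) ^ f / γ c := hb1
      _ = (1 - γ c) ^ f * (c : ℝ) ^ v := hdiv
      _ ≤ Real.exp (1 - (c : ℝ) ^ (ν - v)) * (c : ℝ) ^ v := by
          apply mul_le_mul_of_nonneg_right (le_trans h1 h3)
            (Real.rpow_nonneg hcR0.le _)
      _ = Real.exp 1 * (c : ℝ) ^ v * Real.exp (-(c : ℝ) ^ (ν - v)) := by
          rw [show (1 : ℝ) - (c : ℝ) ^ (ν - v) = 1 + -(c : ℝ) ^ (ν - v) by ring,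
            Real.exp_add]; ring
  refine ⟨main, ?_⟩
  intro m
  set δ := ν - v with hδ
  have hδpos : 0 < δ := by simp [hδ]; linarith
  -- eventually c - ⌊c^ν⌋ ≥ 1
  have hev : ∀ᶠ c : ℕ in Filter.atTop, 1 ≤ c - ⌊(c : ℝ) ^ ν⌋₊ := by
    filter_upwards [Filter.eventually_ge_atTop 2] with c hc
    have hcR : (1 : ℝ) < (c : ℝ) := by exact_mod_cast (show 1 < c by omega)
    have : (c : ℝ) ^ ν < (c : ℝ) := by
      calc (c : ℝ) ^ ν < (c : ℝ) ^ (1 : ℝ) :=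
        Real.rpow_lt_rpow_left_iff hcR |>.2 hν1
      _ = (c : ℝ) := Real.rpow_one _
    have : ⌊(c : ℝ) ^ ν⌋₊ < c := by
      rw [Nat.floor_lt (Real.rpow_nonneg (by positivity) _)]; exact this
    omega
  -- upper bound tends to 0
  have hub : Filter.Tendsto
      (fun c : ℕ => (c : ℝ) ^ m * (Real.exp 1 * (c : ℝ) ^ v * Real.exp (-(c : ℝ) ^ δ)))
      Filter.atTop (nhds 0) := by
    have hcomp : Filter.Tendsto (fun c : ℕ => (c : ℝ) ^ δ) Filter.atTop Filter.atTop :=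
      (tendsto_rpow_atTop hδpos).comp tendsto_natCast_atTop_atTop
    have hg := (tendsto_rpow_mul_exp_neg_mul_atTop_nhds_zero ((m + v) / δ) 1 one_pos).comp hcomp
    have := hg.const_mul (Real.exp 1)
    rw [mul_zero] at this
    apply this.congr'
    filter_upwards [Filter.eventually_ge_atTop 1] with c hc
    have hcR0 : (0 : ℝ) < (c : ℝ) := by exact_mod_cast (show 0 < c by omega)
    simp only [Function.comp]
    rw [← Real.rpow_natCast (c : ℝ) m, ← Real.rpow_mul hcR0.le,
      show δ * ((↑m + v) / δ) = ↑m + v by field_simp,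
      Real.rpow_add hcR0, Real.rpow_natCast]
    ring_nf
  apply squeeze_zero'
  · filter_upwards with c
    exact mul_nonneg (by positivity) (hSnn c _)
  · filter_upwards [hev] with c hc
    exact mul_le_mul_of_nonneg_left (main c hc) (by positivity)
  · exact hub
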